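/- Let Ω ⊆ ℝ^d, let A_cl : ℝ^d → ℝ^{d×d} be continuously differentiable, and for y ∈ ℝ^d let N(y) ∈ ℝ^{d×d} denote the matrix whose j-th column is (∂A_cl/∂y_j)(y) · y. Assume that for every y ∈ Ω, sup_{z≠0} ⟨A_cl(y)z, z⟩/‖z‖² + sup_{z≠0} ⟨N(y)z, z⟩/‖z‖² < 0 (i.e. logm(A_cl(y)) + logm(N(y)) < 0). Let y : [0,∞) → Ω be a differentiable solution of y'(t) = A_cl(y(t)) y(t). Then the function t ↦ ‖A_cl(y(t)) y(t)‖ is nonincreasing on [0,∞). -/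

import Mathlib

open scoped RealInnerProductSpace

/-- Action of a matrix on Euclidean space. -/
noncomputable def mulVecE {d : ℕ} (M : Matrix (Fin d) (Fin d) ℝ)
    (x : EuclideanSpace ℝ (Fin d)) : EuclideanSpace ℝ (Fin d) :=
  Matrix.toEuclideanCLM (𝕜 := ℝ) M x

/-- Given the (entrywise) derivative data `Acl'` of a matrix-valued map `Acl`, the matrix
`N(y) = (∇A_cl(y)) y` whose `j`-th column is `[∂A_cl(y)/∂y_j] y`; entrywise
`N(y) i j = ∑ k (∂A_cl_{ik}/∂y_j)(y) · y_k`. -/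
noncomputable def gradMat {d : ℕ}
    (Acl' : EuclideanSpace ℝ (Fin d) → Fin d → Fin d → (EuclideanSpace ℝ (Fin d) →L[ℝ] ℝ))
    (y : EuclideanSpace ℝ (Fin d)) : Matrix (Fin d) (Fin d) ℝ :=
  Matrix.of fun i j => ∑ k, Acl' y i k (EuclideanSpace.single j 1) * y k

lemma mulVecE_apply {d : ℕ} (M : Matrix (Fin d) (Fin d) ℝ) (x : EuclideanSpace ℝ (Fin d))
    (i : Fin d) : mulVecE M x i = ∑ k, M i k * x k := by
  have : mulVecE M x = (WithLp.equiv 2 _).symm (M.mulVec (WithLp.equiv 2 _ x)) := by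
    simp [mulVecE, Matrix.ofLp_toEuclideanCLM]
    rfl
  rw [this]
  rfl

lemma clm_eq_sum {d : ℕ} (x : EuclideanSpace ℝ (Fin d)) (L : EuclideanSpace ℝ (Fin d) →L[ℝ] ℝ) :
    L x = ∑ j, x j * L (EuclideanSpace.single j 1) := by
  have h := (EuclideanSpace.basisFun (Fin d) ℝ).sum_repr x
  conv_lhs => rw [← h]
  rw [map_sum]
  simp [EuclideanSpace.basisFun_apply, EuclideanSpace.basisFun_repr, mul_comm]

/-- If `A_cl` is continuously differentiable and
`logm(A_cl(y)) + logm((∇A_cl(y)) y) < 0` on `Ω`, then along any solution of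
`y' = A_cl(y) y` staying in `Ω`, the function `t ↦ ‖A_cl(y(t)) y(t)‖` is nonincreasing
on `[0, ∞)`. -/
theorem closed_loop_norm_antitone {d : ℕ} (Ω : Set (EuclideanSpace ℝ (Fin d)))
    (Acl : EuclideanSpace ℝ (Fin d) → Matrix (Fin d) (Fin d) ℝ)
    (Acl' : EuclideanSpace ℝ (Fin d) → Fin d → Fin d → (EuclideanSpace ℝ (Fin d) →L[ℝ] ℝ))
    (hderiv : ∀ (i k : Fin d) (x : EuclideanSpace ℝ (Fin d)),
      HasFDerivAt (fun z => Acl z i k) (Acl' x i k) x)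
    (hcont : ∀ i k : Fin d, Continuous fun x => Acl' x i k)
    (hlogm : ∀ y ∈ Ω, ∃ a b : ℝ, a + b < 0 ∧
      (∀ z : EuclideanSpace ℝ (Fin d), ⟪mulVecE (Acl y) z, z⟫ ≤ a * ‖z‖ ^ 2) ∧
      (∀ z : EuclideanSpace ℝ (Fin d), ⟪mulVecE (gradMat Acl' y) z, z⟫ ≤ b * ‖z‖ ^ 2))
    (y : ℝ → EuclideanSpace ℝ (Fin d))
    (hmem : ∀ t : ℝ, 0 ≤ t → y t ∈ Ω)
    (hode : ∀ t : ℝ, 0 ≤ t → HasDerivAt y (mulVecE (Acl (y t)) (y t)) t) :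
    AntitoneOn (fun t => ‖mulVecE (Acl (y t)) (y t)‖) (Set.Ici (0 : ℝ)) := by
  classical
  set w : ℝ → EuclideanSpace ℝ (Fin d) := fun t => mulVecE (Acl (y t)) (y t) with hw
  -- the coordinate projection as a CLM
  let e := PiLp.continuousLinearEquiv 2 ℝ (fun _ : Fin d => ℝ)
  let P : (k : Fin d) → (EuclideanSpace ℝ (Fin d) →L[ℝ] ℝ) :=
    fun k => (ContinuousLinearMap.proj k).comp e.toContinuousLinearMap
  -- derivative of w
  have hw' : ∀ t : ℝ, 0 ≤ t →
      HasDerivAt w (mulVecE (gradMat Acl' (y t)) (w t) + mulVecE (Acl (y t)) (w t)) t := by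
    intro t ht
    have hy := hode t ht
    -- component derivatives
    have hcomp : ∀ i : Fin d, HasDerivAt (fun s => ∑ k, Acl (y s) i k * (y s) k)
        (∑ k, (Acl' (y t) i k (w t) * (y t) k + Acl (y t) i k * (w t) k)) t := by
      intro i
      apply HasDerivAt.fun_sum
      intro k _
      have h1 : HasDerivAt (fun s => Acl (y s) i k) (Acl' (y t) i k (w t)) t :=
        (hderiv i k (y t)).comp_hasDerivAt t hy
      have h2 : HasDerivAt (fun s => (y s) k) ((w t) k) t :=
        (P k).hasFDerivAt.comp_hasDerivAt t hy
      exact h1.mul h2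
    -- pi-level derivative
    have hpi : HasDerivAt (fun s => (fun i => ∑ k, Acl (y s) i k * (y s) k))
        (fun i => ∑ k, (Acl' (y t) i k (w t) * (y t) k + Acl (y t) i k * (w t) k)) t :=
      hasDerivAt_pi.2 hcomp
    have hpi2 := (e.symm.hasFDerivAt.comp_hasDerivAt t hpi)
    have hfun : w = fun s => e.symm (fun i => ∑ k, Acl (y s) i k * (y s) k) := by
      funext s
      ext i
      exact mulVecE_apply _ _ i
    have hval : e.symm (fun i => ∑ k, (Acl' (y t) i k (w t) * (y t) k + Acl (y t) i k * (w t) k))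
        = mulVecE (gradMat Acl' (y t)) (w t) + mulVecE (Acl (y t)) (w t) := by
      ext i
      have lhs_eq : (e.symm (fun i => ∑ k, (Acl' (y t) i k (w t) * (y t) k
          + Acl (y t) i k * (w t) k))) i
          = ∑ k, (Acl' (y t) i k (w t) * (y t) k + Acl (y t) i k * (w t) k) := rfl
      rw [lhs_eq]
      have rhs_eq : (mulVecE (gradMat Acl' (y t)) (w t) + mulVecE (Acl (y t)) (w t)) i
          = (∑ j, gradMat Acl' (y t) i j * (w t) j) + ∑ k, Acl (y t) i k * (w t) k := by
        rw [PiLp.add_apply, mulVecE_apply, mulVecE_apply]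
      rw [rhs_eq, Finset.sum_add_distrib]
      congr 1
      -- ∑ k Acl'(yt) i k (w t) * yt k = ∑ j N i j * (w t) j
      have : ∀ k, Acl' (y t) i k (w t) = ∑ j, (w t) j * Acl' (y t) i k (EuclideanSpace.single j 1) :=
        fun k => clm_eq_sum (w t) _
      simp only [this, gradMat, Matrix.of_apply, Finset.sum_mul, Finset.mul_sum]
      rw [Finset.sum_comm]
      apply Finset.sum_congr rfl
      intro j _
      apply Finset.sum_congr rfl
      intro k _
      ring
    have hW : HasDerivAt w (e.symm fun i => ∑ k,
        (Acl' (y t) i k (w t) * (y t) k + Acl (y t) i k * (w t) k)) t := by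
      rw [hfun]; exact hpi2
    exact hval ▸ hW
  -- squared norm is antitone
  set g : ℝ → ℝ := fun t => ⟪w t, w t⟫ with hg
  have hgderiv : ∀ t : ℝ, 0 ≤ t → HasDerivAt g
      (⟪w t, mulVecE (gradMat Acl' (y t)) (w t) + mulVecE (Acl (y t)) (w t)⟫
        + ⟪mulVecE (gradMat Acl' (y t)) (w t) + mulVecE (Acl (y t)) (w t), w t⟫) t :=
    fun t ht => (hw' t ht).inner ℝ (hw' t ht)
  have hg_nonpos : ∀ t : ℝ, 0 < t → deriv g t ≤ 0 := by
    intro t ht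
    have ht' := le_of_lt ht
    rw [(hgderiv t ht').deriv]
    obtain ⟨a, b, hab, hA, hN⟩ := hlogm (y t) (hmem t ht')
    have h1 : ⟪mulVecE (Acl (y t)) (w t), w t⟫ ≤ a * ‖w t‖ ^ 2 := hA (w t)
    have h2 : ⟪mulVecE (gradMat Acl' (y t)) (w t), w t⟫ ≤ b * ‖w t‖ ^ 2 := hN (w t)
    have key : ⟪mulVecE (gradMat Acl' (y t)) (w t) + mulVecE (Acl (y t)) (w t), w t⟫
        ≤ (a + b) * ‖w t‖ ^ 2 := by
      rw [inner_add_left]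
      nlinarith
    have hsym : ⟪w t, mulVecE (gradMat Acl' (y t)) (w t) + mulVecE (Acl (y t)) (w t)⟫
        = ⟪mulVecE (gradMat Acl' (y t)) (w t) + mulVecE (Acl (y t)) (w t), w t⟫ :=
      real_inner_comm _ _
    rw [hsym]
    have hn : (a + b) * ‖w t‖ ^ 2 ≤ 0 :=
      mul_nonpos_of_nonpos_of_nonneg (le_of_lt hab) (by positivity)
    linarith
  have hgdiff : ∀ t ∈ Set.Ici (0 : ℝ), DifferentiableAt ℝ g t :=
    fun t ht => (hgderiv t ht).differentiableAt
  have hganti : AntitoneOn g (Set.Ici (0 : ℝ)) := by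
    apply antitoneOn_of_deriv_nonpos (convex_Ici 0)
    · exact fun t ht => (hgdiff t ht).continuousAt.continuousWithinAt
    · intro t ht
      rw [interior_Ici] at ht
      exact (hgdiff t (le_of_lt ht : (0:ℝ) ≤ t)).differentiableWithinAt
    · intro t ht
      rw [interior_Ici] at ht
      exact hg_nonpos t ht
  intro s hs t ht hst
  have := hganti hs ht hst
  simp only [hg, real_inner_self_eq_norm_sq] at this
  have hnorm : ‖w t‖ ≤ ‖w s‖ := by
    nlinarith [norm_nonneg (w t), norm_nonneg (w s)]
  exact hnorm
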